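/- Every holomorphic automorphism of the trivial principal C*-bundle over the punctured disc D* which extends to a C*-equivariant automorphism of the local model (M₀, π₀) over D is given by multiplication by g(z) = e^{f(z)} z^k for some holomorphic f on D and k ∈ Z; that is, the sheaf of C*-equivariant automorphisms of (M₀,π₀) over (C,{0}) is O^×(*{0}). -/

import Mathlib

open Complex Filter Topology NNReal

/-- Every entire nonvanishing function has an entire logarithm. -/
lemma exists_entire_log (H : ℂ → ℂ) (hH : Differentiable ℂ H) (hHne : ∀ z, H z ≠ 0) :
    ∃ f : ℂ → ℂ, Differentiable ℂ f ∧ ∀ z, H z = Complex.exp (f z) := by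
  -- the logarithmic derivative
  have hderiv : Differentiable ℂ (deriv H) := by
    have := (hH.differentiableOn.analyticOnNhd isOpen_univ).deriv
    exact fun z => (this z (Set.mem_univ z)).differentiableAt
  set q : ℂ → ℂ := fun z => deriv H z / H z with hq
  have hqd : Differentiable ℂ q := hderiv.div hH hHne
  -- power series of q at 0 with infinite radius
  set p := cauchyPowerSeries q 0 1 with hpdef
  have hp : HasFPowerSeriesOnBall q p 0 ⊤ := by
    simpa using hqd.hasFPowerSeriesOnBall 0 (R := 1) one_pos
  have hrad : p.radius = ⊤ := top_le_iff.mp hp.r_le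
  set a : ℕ → ℂ := fun n => p.coeff n with ha
  have hsum : ∀ z : ℂ, HasSum (fun n => a n * z ^ n) (q z) := by
    intro z
    have hz : z ∈ Metric.eball (0 : ℂ) ⊤ := by simp
    have := hp.hasSum hz
    rw [zero_add] at this
    refine HasSum.congr_fun this fun n => ?_
    rw [p.apply_eq_pow_smul_coeff, smul_eq_mul]; ring
  -- the integrated series
  set G : ℕ → ℂ → ℂ := fun n y => ((n : ℂ) + 1)⁻¹ * a n * y ^ (n + 1) with hG
  set G' : ℕ → ℂ → ℂ := fun n y => a n * y ^ n with hG'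
  have hGd : ∀ n (y : ℂ), HasDerivAt (G n) (G' n y) y := by
    intro n y
    have h1 : HasDerivAt (fun y : ℂ => y ^ (n + 1)) (((n : ℂ) + 1) * y ^ n) y := by
      simpa using hasDerivAt_pow (n + 1) y
    have h2 := h1.const_mul (((n : ℂ) + 1)⁻¹ * a n)
    refine h2.congr_deriv ?_
    have hne : ((n : ℂ) + 1) ≠ 0 := Nat.cast_add_one_ne_zero n
    show _ = a n * y ^ n
    linear_combination (a n * y ^ n) * (inv_mul_cancel₀ (Nat.cast_add_one_ne_zero n : ((n : ℂ) + 1) ≠ 0))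
  have hG0 : ∀ n, G n 0 = 0 := by intro n; simp [hG]
  have hDf : ∀ z : ℂ, HasDerivAt (fun y => ∑' n, G n y) (q z) z := by
    intro z
    set R : ℝ≥0 := ‖z‖₊ + 1 with hR
    have hzR : z ∈ Metric.ball (0 : ℂ) R := by
      simp only [Metric.mem_ball, dist_zero_right, hR]
      have : ‖z‖ < ‖z‖ + 1 := by linarith
      simpa [← coe_nnnorm] using this
    have h0R : (0 : ℂ) ∈ Metric.ball (0 : ℂ) R := by
      simp only [Metric.mem_ball, dist_self]
      rw [hR]; push_cast; positivity
    have hu : Summable fun n => ‖p n‖ * (R : ℝ) ^ n :=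
      p.summable_norm_mul_pow (by rw [hrad]; exact ENNReal.coe_lt_top)
    have hbound : ∀ n (y : ℂ), y ∈ Metric.ball (0 : ℂ) R → ‖G' n y‖ ≤ ‖p n‖ * (R : ℝ) ^ n := by
      intro n y hy
      have hyR : ‖y‖ ≤ (R : ℝ) := by
        simp only [Metric.mem_ball, dist_zero_right] at hy
        exact hy.le
      have : ‖G' n y‖ = ‖a n‖ * ‖y‖ ^ n := by simp [hG']
      rw [this, p.norm_apply_eq_norm_coef]
      exact mul_le_mul_of_nonneg_left (pow_le_pow_left₀ (norm_nonneg y) hyR n) (norm_nonneg _)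
    have hsum0 : Summable fun n => G n 0 := by
      simp only [hG0]; exact summable_zero
    have := hasDerivAt_tsum_of_isPreconnected hu Metric.isOpen_ball
      (convex_ball (0 : ℂ) (R : ℝ)).isPreconnected
      (fun n y _ => hGd n y) hbound h0R hsum0 hzR
    rwa [(hsum z).tsum_eq] at this
  -- the candidate logarithm
  set f : ℂ → ℂ := fun z => Complex.log (H 0) + ∑' n, G n z with hf
  have hfd : ∀ z, HasDerivAt f (q z) z := fun z => by
    have h := (hasDerivAt_const z (Complex.log (H 0))).add (hDf z)
    rw [zero_add] at h
    exact h
  refine ⟨f, fun z => (hfd z).differentiableAt, ?_⟩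
  -- H * exp(-f) is constant
  set E : ℂ → ℂ := fun z => H z * Complex.exp (-(f z)) with hE
  have hEd : ∀ z, HasDerivAt E 0 z := by
    intro z
    have h1 := ((hfd z).neg.cexp)
    have h2 := ((hH z).hasDerivAt).mul h1
    refine h2.congr_deriv ?_
    have hz := hHne z
    have hdq : H z * (deriv H z / H z) = deriv H z := mul_div_cancel₀ _ hz
    simp only [hq]
    linear_combination (-Complex.exp (-(f z))) * hdq
  have hconst : ∀ z, E z = E 0 := fun z =>
    is_const_of_deriv_eq_zero (fun w => (hEd w).differentiableAt)
      (fun w => (hEd w).deriv) z 0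
  have hE0 : E 0 = 1 := by
    have hf0 : f 0 = Complex.log (H 0) := by
      simp [hf, hG0]
    rw [hE]
    simp only [hf0, Complex.exp_neg, Complex.exp_log (hHne 0)]
    exact mul_inv_cancel₀ (hHne 0)
  intro z
  have : H z * Complex.exp (-(f z)) = 1 := (hconst z).trans hE0
  rw [Complex.exp_neg] at this
  exact (mul_inv_eq_one₀ (Complex.exp_ne_zero _)).mp this

/-- every holomorphic automorphism of the trivial principal
`ℂ^*`-bundle over the punctured disc, given away from the zero fibre by
`(x, y) ↦ (g(z)x, g(z)⁻¹y)` with `z = xy` and `g` holomorphic and nonvanishing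
on the punctured plane, which extends to a `ℂ^*`-equivariant automorphism of the
local model `(M₀, π₀)` — i.e. which, read in the chart around the fixed point of
chart `0` and the fixed point of chart `k` (the chart change multiplying the
`x`-coordinate by `z^{-k}` and the `y`-coordinate by `z^k`), extends to a
holomorphic germ `Φ` at the origin with `Φ(0) = 0` and invertible Jacobian —
is given by multiplication by `g(z) = e^{f(z)} z^k` for some holomorphic `f`;
that is, the sheaf of `ℂ^*`-equivariant automorphisms of `(M₀, π₀)` over
`(ℂ, {0})` is `O^×(*{0})`. -/
theorem equivariant_automorphisms_are_meromorphic
    (g : ℂ → ℂ)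
    (hg : DifferentiableOn ℂ g {z : ℂ | z ≠ 0})
    (hg0 : ∀ z : ℂ, z ≠ 0 → g z ≠ 0)
    (k : ℤ) (Φ : ℂ × ℂ → ℂ × ℂ)
    (hΦa : AnalyticAt ℂ Φ 0)
    (hΦ0 : Φ 0 = 0)
    (hΦjac : Function.Bijective (fderiv ℂ Φ 0))
    (hΦeq : ∀ x y : ℂ, x * y ≠ 0 →
      Φ (x, y) = ((x * y) ^ (-k) * g (x * y) * x,
                  (x * y) ^ k * (g (x * y))⁻¹ * y)) :
    ∃ f : ℂ → ℂ, Differentiable ℂ f ∧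
      ∀ z : ℂ, z ≠ 0 → g z = Complex.exp (f z) * z ^ k := by
  -- the diagonal restrictions of Φ
  set F : ℂ → ℂ := fun x => (Φ (x, x)).1 with hF
  set S : ℂ → ℂ := fun x => (Φ (x, x)).2 with hS
  have hdiag : AnalyticAt ℂ (fun x : ℂ => ((x, x) : ℂ × ℂ)) 0 :=
    analyticAt_id.prod analyticAt_id
  have hΦa' : AnalyticAt ℂ (fun x : ℂ => Φ (x, x)) 0 := by
    refine AnalyticAt.comp ?_ hdiag
    simpa [Prod.mk_zero_zero] using hΦa
  have hFa : AnalyticAt ℂ F 0 := ((ContinuousLinearMap.fst ℂ ℂ ℂ).analyticAt _).comp hΦa'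
  have hSa : AnalyticAt ℂ S 0 := ((ContinuousLinearMap.snd ℂ ℂ ℂ).analyticAt _).comp hΦa'
  have hF0 : F 0 = 0 := by simp [hF, Prod.mk_zero_zero, hΦ0]
  have hS0 : S 0 = 0 := by simp [hS, Prod.mk_zero_zero, hΦ0]
  -- the slope functions
  set u : ℂ → ℂ := dslope F 0 with hu
  set v : ℂ → ℂ := dslope S 0 with hv
  have huc : ContinuousAt u 0 := continuousAt_dslope_same.mpr hFa.differentiableAt
  have hvc : ContinuousAt v 0 := continuousAt_dslope_same.mpr hSa.differentiableAt
  have huF : ∀ x : ℂ, x * u x = F x := by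
    intro x
    have := sub_smul_dslope F 0 x
    simpa [hF0, smul_eq_mul] using this
  have hvS : ∀ x : ℂ, x * v x = S x := by
    intro x
    have := sub_smul_dslope S 0 x
    simpa [hS0, smul_eq_mul] using this
  have hux : ∀ x : ℂ, x ≠ 0 → u x = (x * x) ^ (-k) * g (x * x) := by
    intro x hx
    have hxx : x * x ≠ 0 := mul_ne_zero hx hx
    have h1 : x * u x = (x * x) ^ (-k) * g (x * x) * x := by
      rw [huF x]
      show (Φ (x, x)).1 = _
      rw [hΦeq x x hxx]
    exact mul_left_cancel₀ hx (h1.trans (by ring))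
  have hvx : ∀ x : ℂ, x ≠ 0 → v x = (x * x) ^ k * (g (x * x))⁻¹ := by
    intro x hx
    have hxx : x * x ≠ 0 := mul_ne_zero hx hx
    have h1 : x * v x = (x * x) ^ k * (g (x * x))⁻¹ * x := by
      rw [hvS x]
      show (Φ (x, x)).2 = _
      rw [hΦeq x x hxx]
    exact mul_left_cancel₀ hx (h1.trans (by ring))
  have huv : ∀ x : ℂ, x ≠ 0 → u x * v x = 1 := by
    intro x hx
    have hxx : x * x ≠ 0 := mul_ne_zero hx hx
    rw [hux x hx, hvx x hx, zpow_neg]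
    field_simp [zpow_ne_zero k hxx, hg0 _ hxx]
    exact div_self (by rw [sq]; exact hg0 _ hxx)
  -- `u 0 ≠ 0` by continuity
  have hu0v0 : u 0 * v 0 = 1 := by
    have h1 : Filter.Tendsto (fun x => u x * v x) (nhdsWithin (0:ℂ) {(0:ℂ)}ᶜ)
        (nhds (u 0 * v 0)) :=
      ((huc.tendsto.mono_left nhdsWithin_le_nhds).mul
        (hvc.tendsto.mono_left nhdsWithin_le_nhds))
    have h2 : (fun x => u x * v x) =ᶠ[nhdsWithin (0:ℂ) {(0:ℂ)}ᶜ] fun _ => 1 :=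
      Filter.eventually_of_mem self_mem_nhdsWithin fun x hx => huv x hx
    have h3 : Filter.Tendsto (fun _ : ℂ => (1:ℂ)) (nhdsWithin (0:ℂ) {(0:ℂ)}ᶜ)
        (nhds (u 0 * v 0)) := h1.congr' h2
    exact tendsto_nhds_unique h3 tendsto_const_nhds
  have hu0 : u 0 ≠ 0 := left_ne_zero_of_mul_eq_one hu0v0
  -- the function z^(-k) g(z) and its extension across 0
  set h : ℂ → ℂ := fun z => z ^ (-k) * g z with hh
  have hkey : ∀ x : ℂ, x ≠ 0 → h (x * x) = u x := by
    intro x hx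
    rw [hh, hux x hx]
  set H : ℂ → ℂ := Function.update h 0 (u 0) with hH
  -- square root function
  set σ : ℂ → ℂ := fun z => z ^ ((1 : ℂ)/2) with hσ
  have hσsq : ∀ z : ℂ, z ≠ 0 → σ z * σ z = z := by
    intro z hz
    rw [hσ, ← Complex.cpow_add _ _ hz]
    norm_num
  have hσne : ∀ z : ℂ, z ≠ 0 → σ z ≠ 0 := by
    intro z hz hc
    apply hz
    rw [← hσsq z hz, hc, mul_zero]
  have hσ0 : Filter.Tendsto σ (nhdsWithin (0:ℂ) {(0:ℂ)}ᶜ) (nhdsWithin (0:ℂ) {(0:ℂ)}ᶜ) := by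
    rw [tendsto_nhdsWithin_iff]
    constructor
    · rw [NormedAddCommGroup.tendsto_nhds_zero]
      intro ε hε
      have hball : ∀ᶠ z in nhdsWithin (0:ℂ) {(0:ℂ)}ᶜ, ‖z‖ < ε ^ 2 := by
        apply Filter.Eventually.filter_mono nhdsWithin_le_nhds
        have : Metric.ball (0:ℂ) (ε ^ 2) ∈ nhds (0:ℂ) :=
          Metric.ball_mem_nhds _ (by positivity)
        exact Filter.eventually_of_mem this fun z hz => by
          simpa [dist_zero_right] using hz
      filter_upwards [hball, self_mem_nhdsWithin] with z hz hz0
      have hz0' : z ≠ 0 := hz0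
      have hsq : ‖σ z‖ ^ 2 = ‖z‖ := by
        rw [sq, ← norm_mul, hσsq z hz0']
      nlinarith [norm_nonneg (σ z), hε]
    · filter_upwards [self_mem_nhdsWithin] with z hz
      exact hσne z hz
  have htend : Filter.Tendsto h (nhdsWithin (0:ℂ) {(0:ℂ)}ᶜ) (nhds (u 0)) := by
    have h1 : Filter.Tendsto (u ∘ σ) (nhdsWithin (0:ℂ) {(0:ℂ)}ᶜ) (nhds (u 0)) :=
      huc.tendsto.comp (hσ0.mono_right nhdsWithin_le_nhds)
    have heq : (u ∘ σ) =ᶠ[nhdsWithin (0:ℂ) {(0:ℂ)}ᶜ] h :=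
      Filter.eventually_of_mem self_mem_nhdsWithin fun z hz => by
        have hz' : z ≠ 0 := hz
        have h2 := hkey (σ z) (hσne z hz')
        rw [hσsq z hz'] at h2
        exact h2.symm
    exact h1.congr' heq
  -- H is continuous at 0, differentiable away from 0, hence entire
  have hHcont : ContinuousAt H 0 := continuousAt_update_same.mpr htend
  have hhd : ∀ z : ℂ, z ≠ 0 → DifferentiableAt ℂ h z := by
    intro z hz
    have h1 : DifferentiableAt ℂ (fun w : ℂ => w ^ (-k)) z :=
      differentiableAt_zpow.mpr (Or.inl hz)
    have h2 : DifferentiableAt ℂ g z :=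
      hg.differentiableAt ((isOpen_ne : IsOpen {w : ℂ | w ≠ 0}).mem_nhds hz)
    exact h1.mul h2
  have hHd : ∀ z : ℂ, z ≠ 0 → DifferentiableAt ℂ H z := by
    intro z hz
    have hmem : {w : ℂ | w ≠ 0} ∈ nhds z :=
      (isOpen_ne : IsOpen {w : ℂ | w ≠ 0}).mem_nhds hz
    have heq : H =ᶠ[nhds z] h :=
      Filter.eventually_of_mem hmem fun w hw => Function.update_of_ne hw _ _
    exact (hhd z hz).congr_of_eventuallyEq heq
  have hHa0 : AnalyticAt ℂ H 0 := by
    apply Complex.analyticAt_of_differentiable_on_punctured_nhds_of_continuousAt _ hHcont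
    filter_upwards [self_mem_nhdsWithin] with z hz
    exact hHd z hz
  have hHdiff : Differentiable ℂ H := by
    intro z
    rcases eq_or_ne z 0 with rfl | hz
    · exact hHa0.differentiableAt
    · exact hHd z hz
  have hHne : ∀ z : ℂ, H z ≠ 0 := by
    intro z
    rcases eq_or_ne z 0 with rfl | hz
    · rw [hH, Function.update_self]; exact hu0
    · rw [hH, Function.update_of_ne hz]
      exact mul_ne_zero (zpow_ne_zero _ hz) (hg0 z hz)
  obtain ⟨f, hfd, hfe⟩ := exists_entire_log H hHdiff hHne
  refine ⟨f, hfd, fun z hz => ?_⟩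
  have h1 : Complex.exp (f z) = z ^ (-k) * g z := by
    rw [← hfe z, hH, Function.update_of_ne hz]
  rw [h1, zpow_neg]
  field_simp [zpow_ne_zero k hz]
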